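/- Let L/K be a cyclic Galois field extension of degree r with Galois group generated by Φ, and let ε : D_{L,1} → End_K(L) be the isomorphism sending T to Φ. Then for every f ∈ D_{L,1}, the reduced norm Nrd(f) equals the determinant of the K-linear endomorphism ε(f) of L. -/

import Mathlib

/-- The matrix `M_f` of right multiplication by `f = a₀ + a₁T + ⋯ + a_{r−1}T^{r−1}`
on `D_{L,x} = L[T;Φ]/(T^r − x)` in the `L`-basis `(1, T, …, T^{r-1})`; its
determinant is the reduced norm `Nrd(f)`. -/
noncomputable def oreMatrix {L : Type*} [CommRing L] (r : ℕ) (Φ : L → L) (x : L)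
    (a : Fin r → L) : Matrix (Fin r) (Fin r) L :=
  Matrix.of fun u v =>
    if h : v.val ≤ u.val then
      Φ^[v.val] (a ⟨u.val - v.val, by have := u.isLt; omega⟩)
    else
      x * Φ^[v.val] (a ⟨u.val + r - v.val, by have := u.isLt; have := v.isLt; omega⟩)

/-- for `L/K` cyclic Galois of degree `r` generated by `Φ` and
`ε : D_{L,1} → End_K(L)` the isomorphism sending `T ↦ Φ`, the reduced norm
`Nrd(f)` equals the determinant of the `K`-linear endomorphism `ε(f)`. -/
theorem stmt_7 (K L : Type*) [Field K] [Field L] [Algebra K L] [IsGalois K L]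
    (r : ℕ) (hr : 0 < r) (hrk : Module.finrank K L = r)
    (Φ : L ≃ₐ[K] L) (hgen : ∀ σ : L ≃ₐ[K] L, σ ∈ Subgroup.zpowers Φ)
    (a : Fin r → L) :
    (oreMatrix r ⇑Φ (1 : L) a).det
      = algebraMap K L
          (LinearMap.det (∑ i : Fin r, (LinearMap.mulLeft K (a i)) ∘ₗ (Φ.toLinearMap ^ i.val))) := by
  classical
  haveI : NeZero r := ⟨hr.ne'⟩
  haveI : FiniteDimensional K L :=
    Module.finite_of_finrank_pos (by rw [hrk]; exact hr)
  have hcard : Fintype.card (L ≃ₐ[K] L) = r := by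
    rw [← Nat.card_eq_fintype_card, IsGalois.card_aut_eq_finrank, hrk]
  have horder : orderOf Φ = r := by
    rw [orderOf_eq_card_of_forall_mem_zpowers hgen, Nat.card_eq_fintype_card, hcard]
  -- iterate vs pow
  have hiter : ∀ (n : ℕ) (x : L), (⇑Φ)^[n] x = (Φ ^ n) x := by
    intro n
    induction n with
    | zero => intro x; simp
    | succ n ih =>
        intro x
        rw [Function.iterate_succ', pow_succ']
        rw [Function.comp_apply, ih, AlgEquiv.mul_apply]
  have hlinpow : ∀ (n : ℕ) (x : L), (Φ.toLinearMap ^ n) x = (Φ ^ n) x := by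
    intro n
    induction n with
    | zero => intro x; simp
    | succ n ih =>
        intro x
        rw [pow_succ', pow_succ']
        simp [Module.End.mul_apply, AlgEquiv.mul_apply, ih]
  set εf : L →ₗ[K] L :=
    ∑ i : Fin r, (LinearMap.mulLeft K (a i)) ∘ₗ (Φ.toLinearMap ^ i.val) with hεf
  have hεf_apply : ∀ x : L, εf x = ∑ i : Fin r, a i * (Φ ^ (i : ℕ)) x := by
    intro x
    rw [hεf]
    simp only [LinearMap.sum_apply, LinearMap.comp_apply, LinearMap.mulLeft_apply]
    exact Finset.sum_congr rfl fun i _ => by rw [hlinpow]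
  set b : Module.Basis (Fin r) K L := Module.finBasisOfFinrankEq K L hrk with hb
  set P : Matrix (Fin r) (Fin r) L :=
    Matrix.of (fun j k : Fin r => (Φ ^ (j : ℕ)) (b k)) with hP
  set C : Matrix (Fin r) (Fin r) K := LinearMap.toMatrix b b εf with hC
  -- P has nonzero determinant (Dedekind independence of characters)
  have hPdet : P.det ≠ 0 := by
    intro h0
    obtain ⟨v, hv, hvP⟩ := Matrix.exists_vecMul_eq_zero_iff.mpr h0
    -- the K-linear map ∑ v j • Φ^j vanishes on the basis, hence everywhere
    set G : L →ₗ[K] L :=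
      ∑ j : Fin r, (LinearMap.mulLeft K (v j)) ∘ₗ (Φ ^ (j : ℕ)).toLinearMap with hG
    have hGb : ∀ k, G (b k) = 0 := by
      intro k
      have := congrFun hvP k
      simp only [Matrix.vecMul, dotProduct, Pi.zero_apply] at this
      rw [hG]
      simp only [LinearMap.sum_apply, LinearMap.comp_apply, LinearMap.mulLeft_apply,
        AlgEquiv.toLinearMap_apply]
      simpa [hP, Matrix.of_apply] using this
    have hG0 : G = 0 := b.ext fun k => hGb k
    have hall : ∀ x : L, ∑ j : Fin r, v j * (Φ ^ (j : ℕ)) x = 0 := by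
      intro x
      have := congrArg (fun g => g x) hG0
      simpa [hG, LinearMap.sum_apply] using this
    -- characters
    set c : Fin r → (L →* L) := fun j => ((Φ ^ (j : ℕ)).toAlgHom : L →ₐ[K] L).toRingHom.toMonoidHom
      with hc
    have hcinj : Function.Injective c := by
      intro i j hij
      have hfun : ∀ x, (Φ ^ (i : ℕ)) x = (Φ ^ (j : ℕ)) x := fun x => by
        have := congrArg (fun f : L →* L => f x) hij
        simpa [hc] using this
      have hpow : Φ ^ (i : ℕ) = Φ ^ (j : ℕ) := AlgEquiv.ext hfun
      have := pow_eq_pow_iff_modEq.mp hpow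
      rw [horder] at this
      have hi := i.isLt
      have hj := j.isLt
      have : (i : ℕ) % r = (j : ℕ) % r := this
      rw [Nat.mod_eq_of_lt hi, Nat.mod_eq_of_lt hj] at this
      exact Fin.ext this
    have hli : LinearIndependent L (fun j : Fin r => (c j : L → L)) :=
      (linearIndependent_monoidHom L L).comp c hcinj
    have := Fintype.linearIndependent_iff.mp hli v ?_ 
    · exact hv (funext fun j => this j)
    · funext x
      simpa [hc, Finset.sum_apply, Pi.smul_apply, smul_eq_mul] using hall x
  -- the key intertwining identity
  have hΦmod : ∀ n : ℕ, Φ ^ (n % r) = Φ ^ n := by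
    intro n
    conv_rhs => rw [← pow_mod_orderOf]
    rw [horder]
  have key : (oreMatrix r ⇑Φ (1 : L) a).transpose * P = P * (C.map (algebraMap K L)) := by
    ext j k
    rw [Matrix.mul_apply, Matrix.mul_apply]
    have hPpart : ∀ i : Fin r, P (j + i) k = (Φ ^ (j : ℕ)) ((Φ ^ (i : ℕ)) (b k)) := by
      intro i
      have hval : ((j + i : Fin r) : ℕ) = ((j : ℕ) + (i : ℕ)) % r := by
        simp [Fin.add_def]
      rw [hP]
      simp only [Matrix.of_apply]
      rw [hval, hΦmod, pow_add, AlgEquiv.mul_apply]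
    have hMpart : ∀ i : Fin r,
        oreMatrix r ⇑Φ (1 : L) a (j + i) j = (Φ ^ (j : ℕ)) (a i) := by
      intro i
      have hval : ((j + i : Fin r) : ℕ) = ((j : ℕ) + (i : ℕ)) % r := by
        simp [Fin.add_def]
      have hjlt := j.isLt; have hilt := i.isLt
      rcases lt_or_ge ((j : ℕ) + (i : ℕ)) r with hlt | hle
      · have hv2 : ((j + i : Fin r) : ℕ) = (j : ℕ) + (i : ℕ) := by
          rw [hval, Nat.mod_eq_of_lt hlt]
        simp only [oreMatrix, Matrix.of_apply]
        rw [dif_pos (by omega), hiter]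
        exact congrArg (fun t => (Φ ^ (j : ℕ)) (a t)) (Fin.ext (by simp only [Fin.val_mk]; omega))
      · have hv2 : ((j + i : Fin r) : ℕ) = (j : ℕ) + (i : ℕ) - r := by
          rw [hval, Nat.mod_eq_sub_mod hle, Nat.mod_eq_of_lt (by omega)]
        simp only [oreMatrix, Matrix.of_apply]
        rw [dif_neg (by omega), one_mul, hiter]
        exact congrArg (fun t => (Φ ^ (j : ℕ)) (a t)) (Fin.ext (by simp only [Fin.val_mk]; omega))
    have lhs : ∑ v : Fin r, (oreMatrix r ⇑Φ (1 : L) a).transpose j v * P v k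
        = (Φ ^ (j : ℕ)) (εf (b k)) := by
      calc ∑ v : Fin r, (oreMatrix r ⇑Φ (1 : L) a).transpose j v * P v k
          = ∑ i : Fin r, (oreMatrix r ⇑Φ (1 : L) a).transpose j ((Equiv.addLeft j) i)
              * P ((Equiv.addLeft j) i) k :=
            (Equiv.sum_comp (Equiv.addLeft j)
              (fun v => (oreMatrix r ⇑Φ (1 : L) a).transpose j v * P v k)).symm
        _ = ∑ i : Fin r, (Φ ^ (j : ℕ)) (a i * (Φ ^ (i : ℕ)) (b k)) := by
            refine Finset.sum_congr rfl fun i _ => ?_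
            simp only [Equiv.coe_addLeft]
            rw [Matrix.transpose_apply, hMpart i, hPpart i, ← map_mul]
        _ = (Φ ^ (j : ℕ)) (εf (b k)) := by rw [← map_sum, hεf_apply]
    rw [lhs]
    have hrepr : εf (b k) = ∑ m : Fin r, C m k • b m := by
      rw [hC]
      conv_lhs => rw [← b.sum_repr (εf (b k))]
      exact Finset.sum_congr rfl fun m _ => by rw [LinearMap.toMatrix_apply]
    rw [hrepr, map_sum]
    refine Finset.sum_congr rfl fun m _ => ?_
    rw [map_smul, Algebra.smul_def, Matrix.map_apply, mul_comm]
    rfl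
  -- conclude
  have hdet : (oreMatrix r ⇑Φ (1 : L) a).det * P.det
      = (C.map (algebraMap K L)).det * P.det := by
    rw [← Matrix.det_transpose (oreMatrix r ⇑Φ (1 : L) a), ← Matrix.det_mul, key,
      Matrix.det_mul, mul_comm]
  have hfin := mul_right_cancel₀ hPdet hdet
  rw [hfin, ← RingHom.mapMatrix_apply, ← RingHom.map_det]
  congr 1
  rw [hC, LinearMap.det_toMatrix]
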